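/- Let $a$ be a positive integer and $p$ a prime not dividing $a$. Let $f$ be the multiplicative order of $p$ in the unit group $(\mathbb{Z}/a\mathbb{Z})^{\times}$, and let $g = \phi(a)/f$. Then for every complex number $T$, $\prod_{\chi} (1 - \chi(p)\, T) = (1 - T^{f})^{g}$, where the product runs over all Dirichlet characters $\chi$ modulo $a$ with complex values. -/

import Mathlib

open Finset Polynomial

/-- Fibers of a group hom over points of the image all have the same cardinality as the
fiber over `1`. -/
private lemma fiber_card_eq_aux {G H : Type*} [Group G] [Fintype G] [Group H] [DecidableEq H]
    (φ : G →* H) {z : H} (hz : z ∈ Finset.image φ Finset.univ) :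
    #{ψ ∈ (Finset.univ : Finset G) | φ ψ = z} =
      #{ψ ∈ (Finset.univ : Finset G) | φ ψ = 1} := by
  classical
  obtain ⟨ψ₀, -, hψ₀⟩ := Finset.mem_image.mp hz
  refine Finset.card_nbij' (fun ψ => ψ₀⁻¹ * ψ) (fun ψ => ψ₀ * ψ) ?_ ?_ ?_ ?_
  · intro ψ hψ
    simp only [Finset.mem_coe, Finset.mem_filter, Finset.mem_univ, true_and] at hψ ⊢
    rw [map_mul, map_inv, hψ, hψ₀, inv_mul_cancel]
  · intro ψ hψ
    simp only [Finset.mem_coe, Finset.mem_filter, Finset.mem_univ, true_and] at hψ ⊢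
    rw [map_mul, hψ, mul_one, hψ₀]
  · intro ψ _; group
  · intro ψ _; group

/-- If `ζ` is a primitive `n`-th root of unity in a field `K` (with `n > 0`), then
`∏_{z^n = 1} (1 - z T) = 1 - T ^ n`. -/
private lemma prod_one_sub_nthRoots {K : Type*} [Field K] {n : ℕ} (hn : 0 < n) {ζ : K}
    (hζ : IsPrimitiveRoot ζ n) (T : K) :
    ∏ z ∈ Polynomial.nthRootsFinset n (1 : K), (1 - z * T) = 1 - T ^ n := by
  rcases eq_or_ne T 0 with rfl | hT
  · simp [zero_pow hn.ne']
  · have h := Polynomial.X_pow_sub_one_eq_prod hn hζ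
    have h2 := congrArg (Polynomial.eval T⁻¹) h
    simp only [Polynomial.eval_sub, Polynomial.eval_pow, Polynomial.eval_X, Polynomial.eval_one,
      Polynomial.eval_prod, Polynomial.eval_C] at h2
    have h3 : T ^ n * (T⁻¹ ^ n - 1) = 1 - T ^ n := by
      rw [inv_pow, mul_sub, mul_inv_cancel₀ (pow_ne_zero _ hT), mul_one]
    calc ∏ z ∈ Polynomial.nthRootsFinset n (1 : K), (1 - z * T)
        = ∏ z ∈ Polynomial.nthRootsFinset n (1 : K), (T * (T⁻¹ - z)) := by
          refine Finset.prod_congr rfl fun z _ => ?_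
          field_simp
      _ = T ^ n * ∏ z ∈ Polynomial.nthRootsFinset n (1 : K), (T⁻¹ - z) := by
          rw [Finset.prod_mul_distrib, Finset.prod_const, hζ.card_nthRootsFinset]
      _ = T ^ n * (T⁻¹ ^ n - 1) := by rw [← h2]
      _ = 1 - T ^ n := h3

/-- For a prime `p` not dividing `a`, with `f` the multiplicative order of `p` in
`(ZMod a)ˣ` and `g = φ(a) / f`, we have `∏_χ (1 - χ(p) T) = (1 - T ^ f) ^ g`,
the product over all Dirichlet characters modulo `a` with complex values. -/
theorem stmt3 (a : ℕ) (ha : 0 < a) (p : ℕ) (hp : p.Prime) (hpa : Nat.Coprime p a)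
    (f g : ℕ) (hf : f = orderOf (ZMod.unitOfCoprime p hpa))
    (hg : g = Nat.totient a / f) (T : ℂ) :
    ∏ χ : DirichletCharacter ℂ a, (1 - χ ((p : ℕ) : ZMod a) * T) = (1 - T ^ f) ^ g := by
  classical
  haveI : NeZero a := ⟨ha.ne'⟩
  subst hf hg
  set u : (ZMod a)ˣ := ZMod.unitOfCoprime p hpa with hu
  set f := orderOf u with hf
  have hf0 : 0 < f := orderOf_pos u
  -- enough roots of unity in ℂ
  haveI : NeZero ((Monoid.exponent (ZMod a)ˣ : ℕ) : ℂ) :=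
    ⟨Nat.cast_ne_zero.mpr Monoid.exponent_ne_zero_of_finite⟩
  -- move to unit homomorphisms
  haveI : Fintype ((ZMod a)ˣ →* ℂˣ) :=
    Fintype.ofEquiv _ (MulChar.equivToUnitHom (R := ZMod a) (R' := ℂ))
  -- the evaluation homomorphism at `u`
  set ev : ((ZMod a)ˣ →* ℂˣ) →* ℂˣ :=
    { toFun := fun ψ => ψ u
      map_one' := rfl
      map_mul' := fun ψ₁ ψ₂ => rfl } with hev
  have hstep : ∏ χ : DirichletCharacter ℂ a, (1 - χ ((p : ℕ) : ZMod a) * T)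
      = ∏ ψ : (ZMod a)ˣ →* ℂˣ, (1 - ((ev ψ : ℂˣ) : ℂ) * T) := by
    rw [← Equiv.prod_comp (MulChar.equivToUnitHom (R := ZMod a) (R' := ℂ))
      (fun ψ : (ZMod a)ˣ →* ℂˣ => (1 - ((ev ψ : ℂˣ) : ℂ) * T))]
    refine Fintype.prod_congr _ _ fun χ => ?_
    have h1 : (ev (MulChar.equivToUnitHom χ) : ℂ)
        = ((MulChar.equivToUnitHom χ) u : ℂ) := rfl
    rw [h1, MulChar.coe_equivToUnitHom]
    have h2 : ((u : ZMod a)) = ((p : ℕ) : ZMod a) := ZMod.coe_unitOfCoprime p hpa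
    rw [h2]
  rw [hstep]
  -- the range of `ev`
  set S : Subgroup ℂˣ := ev.range with hS
  haveI : Finite S := by
    have : ((S : Set ℂˣ)).Finite := by
      rw [hS, MonoidHom.coe_range]
      exact Set.finite_range ev
    exact this.to_subtype
  haveI : Fintype S := Fintype.ofFinite S
  -- every element of S is an f-th root of unity
  have hSf0 : ∀ z ∈ S, z ^ f = 1 := by
    rintro z ⟨ψ, rfl⟩
    have : ev ψ = ψ u := rfl
    rw [this, ← map_pow, pow_orderOf_eq_one u, map_one]
  have hSf : ∀ s : S, s ^ f = 1 := by
    rintro ⟨z, hz⟩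
    exact Subtype.ext (hSf0 z hz)
  -- |S| = f
  have hcardS : Nat.card S = f := by
    obtain ⟨ζ, hζ⟩ := IsCyclic.exists_generator (α := S)
    have hord : orderOf ζ = Nat.card S := orderOf_eq_card_of_forall_mem_zpowers hζ
    refine Nat.dvd_antisymm ?_ ?_
    · rw [← hord]
      exact orderOf_dvd_of_pow_eq_one (hSf ζ)
    · -- f ∣ Nat.card S
      have hun : u ^ Nat.card S = 1 := by
        by_contra hne
        obtain ⟨φ, hφ⟩ :=
          CommGroup.exists_apply_ne_one_of_hasEnoughRootsOfUnity ((ZMod a)ˣ) ℂ hne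
        apply hφ
        have hmem : φ u ∈ S := ⟨φ, rfl⟩
        have h1 : (⟨φ u, hmem⟩ : S) ^ Nat.card S = 1 := pow_card_eq_one'
        have h2 : (φ u) ^ Nat.card S = 1 := congrArg Subtype.val h1
        rw [map_pow]
        exact h2
      exact orderOf_dvd_of_pow_eq_one hun
  -- the image finset of ev equals S
  have himS : ∀ z : ℂˣ, z ∈ Finset.image ev Finset.univ ↔ z ∈ S := by
    intro z
    simp only [Finset.mem_image, Finset.mem_univ, true_and]
    exact Iff.symm (MonoidHom.mem_range)
  have hcardim : (Finset.image ev Finset.univ).card = f := by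
    have hset : ((Finset.image ev Finset.univ : Finset ℂˣ) : Set ℂˣ) = (S : Set ℂˣ) := by
      ext z; simpa using himS z
    rw [← Set.ncard_coe_finset, hset, ← Nat.card_coe_set_eq]
    simpa using hcardS
  -- cardinality of the character group is φ(a)
  have hcardD : Fintype.card ((ZMod a)ˣ →* ℂˣ) = Nat.totient a := by
    obtain ⟨e⟩ := CommGroup.monoidHom_mulEquiv_of_hasEnoughRootsOfUnity ((ZMod a)ˣ) ℂ
    rw [← Nat.card_eq_fintype_card, Nat.card_congr e.toEquiv, Nat.card_eq_fintype_card]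
    exact ZMod.card_units_eq_totient a
  -- fiber counting
  set c := #{ψ ∈ (Finset.univ : Finset ((ZMod a)ˣ →* ℂˣ)) | ev ψ = 1} with hc
  have hfc : ∀ z ∈ Finset.image ev Finset.univ,
      #{ψ ∈ (Finset.univ : Finset ((ZMod a)ˣ →* ℂˣ)) | ev ψ = z} = c :=
    fun z hz => fiber_card_eq_aux ev hz
  have hcount : Nat.totient a = f * c := by
    rw [← hcardD, ← Finset.card_univ,
      Finset.card_eq_sum_card_fiberwise
        (fun ψ _ => Finset.mem_image_of_mem ev (Finset.mem_univ ψ)),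
      Finset.sum_congr rfl hfc, Finset.sum_const, smul_eq_mul, hcardim]
  have hgc : Nat.totient a / f = c := by
    rw [hcount, Nat.mul_div_cancel_left _ hf0]
  rw [hgc]
  -- main computation
  have hmain : ∏ ψ : (ZMod a)ˣ →* ℂˣ, (1 - ((ev ψ : ℂˣ) : ℂ) * T)
      = ∏ z ∈ Finset.image ev Finset.univ, (1 - ((z : ℂˣ) : ℂ) * T) ^ c := by
    rw [Finset.prod_comp (fun z : ℂˣ => (1 - ((z : ℂˣ) : ℂ) * T)) ev]
    exact Finset.prod_congr rfl fun z hz => by rw [hfc z hz]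
  rw [hmain, Finset.prod_pow]
  congr 1
  -- identify the image with the f-th roots of unity in ℂ
  obtain ⟨ζu, hζu⟩ := IsCyclic.exists_generator (α := S)
  have hordζ : orderOf ζu = f := by
    rw [orderOf_eq_card_of_forall_mem_zpowers hζu, hcardS]
  have hprim : IsPrimitiveRoot (((ζu : ℂˣ) : ℂ)) f := by
    have h1 : orderOf ((ζu : ℂˣ)) = f := by
      rw [← hordζ]
      exact orderOf_injective S.subtype Subtype.coe_injective ζu
    have h2 : orderOf (((ζu : ℂˣ) : ℂ)) = f := by rw [orderOf_units, h1]
    exact h2 ▸ IsPrimitiveRoot.orderOf (((ζu : ℂˣ) : ℂ))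
  have himage : Finset.image (fun z : ℂˣ => (z : ℂ)) (Finset.image ev Finset.univ)
      = Polynomial.nthRootsFinset f (1 : ℂ) := by
    apply Finset.eq_of_subset_of_card_le
    · intro w hw
      obtain ⟨z, hz, rfl⟩ := Finset.mem_image.mp hw
      rw [Polynomial.mem_nthRootsFinset hf0]
      have h2 : z ^ f = 1 := hSf0 z ((himS z).mp hz)
      have h3 : ((z ^ f : ℂˣ) : ℂ) = ((1 : ℂˣ) : ℂ) := by rw [h2]
      simpa using h3
    · rw [Finset.card_image_of_injective _ (fun x y h => Units.ext h), hcardim,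
        hprim.card_nthRootsFinset]
  calc ∏ z ∈ Finset.image ev Finset.univ, (1 - ((z : ℂˣ) : ℂ) * T)
      = ∏ w ∈ Finset.image (fun z : ℂˣ => (z : ℂ)) (Finset.image ev Finset.univ),
          (1 - w * T) := by
        rw [Finset.prod_image (fun x _ y _ h => Units.ext h)]
    _ = ∏ w ∈ Polynomial.nthRootsFinset f (1 : ℂ), (1 - w * T) := by rw [himage]
    _ = 1 - T ^ f := prod_one_sub_nthRoots hf0 hprim T
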